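/- arXiv:1806.05523 — 5 statements merged into one kernel-verified Lean document; each statement's English description precedes it below -/
import Mathlib

section
/- There is no critical k-truss with exactly k+3 vertices. -/
/-- Every edge of `G` lies in at least `k` triangles. -/
def SimpleGraph.EveryEdgeInTriangles {V : Type*} (G : SimpleGraph V) (k : ℕ) : Prop :=
  ∀ ⦃u v : V⦄, G.Adj u v → k ≤ {w : V | G.Adj u w ∧ G.Adj v w}.ncard

/-- A graph is a `k`-truss if it has no isolated vertices and every edge is
contained in at least `k` triangles. -/
def SimpleGraph.IsTruss {V : Type*} (G : SimpleGraph V) (k : ℕ) : Prop :=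
  (∀ v : V, ∃ u : V, G.Adj v u) ∧ G.EveryEdgeInTriangles k

/-- A critical `k`-truss: a `k`-truss such that the edge-induced subgraph on no
nonempty proper subset of its edges is a `k`-truss. -/
def SimpleGraph.IsCriticalTruss {V : Type*} (G : SimpleGraph V) (k : ℕ) : Prop :=
  G.IsTruss k ∧ ∀ L : Set (Sym2 V), L ⊆ G.edgeSet → L.Nonempty → L ≠ G.edgeSet →
    ¬ (SimpleGraph.fromEdgeSet L).EveryEdgeInTriangles k

theorem no_critical_truss_k_add_three {V : Type*} [Fintype V]
    (G : SimpleGraph V) (k : ℕ) (h : G.IsCriticalTruss k) :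
    Fintype.card V ≠ k + 3 := by
  intro hcard
  classical
  obtain ⟨⟨hiso, htri⟩, hcrit⟩ := h
  have hcardV : Nat.card V = k + 3 := by rw [Nat.card_eq_fintype_card, hcard]
  -- every vertex has at most one non-neighbor
  have huniq : ∀ u v w : V, ¬ G.Adj u v → ¬ G.Adj u w → v ≠ u → w ≠ u → v = w := by
    intro u v w huv huw hvu hwu
    by_contra hvw
    obtain ⟨t, ht⟩ := hiso u
    have hk := htri ht
    set C := {x : V | G.Adj u x ∧ G.Adj t x} with hC
    have hsub : insert t C ⊆ ({u, v, w} : Set V)ᶜ := by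
      intro x hx
      have hax : G.Adj u x := by
        rcases hx with rfl | hx
        · exact ht
        · exact hx.1
      simp only [Set.mem_compl_iff, Set.mem_insert_iff, Set.mem_singleton_iff]
      push_neg
      exact ⟨fun he => G.loopless.irrefl u (he ▸ hax), fun he => huv (he ▸ hax),
        fun he => huw (he ▸ hax)⟩
    have h3 : ({u, v, w} : Set V).ncard = 3 := by
      rw [Set.ncard_insert_of_notMem (by simp [Ne.symm hvu, Ne.symm hwu]),
        Set.ncard_insert_of_notMem (by simp [hvw]), Set.ncard_singleton]
    have hcompl := Set.ncard_add_ncard_compl ({u, v, w} : Set V)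
    have h1 : (insert t C).ncard = C.ncard + 1 := by
      rw [Set.ncard_insert_of_notMem (fun hc => G.loopless.irrefl t hc.2)]
    have hle := Set.ncard_le_ncard hsub (Set.toFinite _)
    omega
  -- there is a vertex `a` such that all other vertices form a clique
  have hclique : ∃ a : V, ∀ x y : V, x ≠ a → y ≠ a → x ≠ y → G.Adj x y := by
    by_cases hcomp : ∀ x y : V, x ≠ y → G.Adj x y
    · have : Nonempty V := by rw [← Fintype.card_pos_iff]; omega
      exact ⟨Classical.arbitrary V, fun x y _ _ hxy => hcomp x y hxy⟩
    · push_neg at hcomp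
      obtain ⟨a, b, hab, hnadj⟩ := hcomp
      refine ⟨a, fun x y hxa hya hxy => ?_⟩
      by_contra hnxy
      have hbx : b ≠ x := by
        rintro rfl
        exact hya (huniq b a y (fun h2 => hnadj h2.symm) hnxy
          (Ne.symm hxa) (Ne.symm hxy)).symm
      have hby : b ≠ y := by
        rintro rfl
        exact hxa (huniq b a x (fun h2 => hnadj h2.symm) (fun h2 => hnxy h2.symm)
          (Ne.symm hya) hxy).symm
      have hax : G.Adj a x := by
        by_contra hnax
        exact hbx (huniq a b x hnadj hnax (Ne.symm hab) hxa)
      have hk := htri hax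
      set S := {w : V | G.Adj a w ∧ G.Adj x w} with hS
      have hsub : ({a, b, x, y} : Set V) ⊆ Sᶜ := by
        intro z hz
        rcases hz with rfl | rfl | rfl | hz
        · exact fun hc => G.loopless.irrefl z hc.1
        · exact fun hc => hnadj hc.1
        · exact fun hc => G.loopless.irrefl z hc.2
        · rw [Set.mem_singleton_iff] at hz; subst hz
          exact fun hc => hnxy hc.2
      have h4 : ({a, b, x, y} : Set V).ncard = 4 := by
        rw [Set.ncard_insert_of_notMem (by simp [hab, Ne.symm hxa, Ne.symm hya]),
          Set.ncard_insert_of_notMem (by simp [hbx, hby]),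
          Set.ncard_insert_of_notMem (by simp [hxy]), Set.ncard_singleton]
      have hcompl := Set.ncard_add_ncard_compl S
      have hle := Set.ncard_le_ncard hsub (Set.toFinite _)
      omega
  obtain ⟨a, ha⟩ := hclique
  set L : Set (Sym2 V) := {e | e ∈ G.edgeSet ∧ a ∉ e} with hLdef
  have hLsub : L ⊆ G.edgeSet := fun e he => he.1
  -- two distinct vertices different from a
  have hcard2 : 1 < (Finset.univ.erase a).card := by
    rw [Finset.card_erase_of_mem (Finset.mem_univ a), Finset.card_univ, hcard]; omega
  obtain ⟨x, hx, y, hy, hxy⟩ := Finset.one_lt_card.mp hcard2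
  have hxa : x ≠ a := (Finset.mem_erase.mp hx).1
  have hya : y ≠ a := (Finset.mem_erase.mp hy).1
  have hLne : L.Nonempty := by
    refine ⟨s(x, y), G.mem_edgeSet.mpr (ha x y hxa hya hxy), ?_⟩
    rw [Sym2.mem_iff]
    push_neg
    exact ⟨Ne.symm hxa, Ne.symm hya⟩
  have hLneq : L ≠ G.edgeSet := by
    intro heq
    obtain ⟨t, ht⟩ := hiso a
    have : s(a, t) ∈ L := heq ▸ G.mem_edgeSet.mpr ht
    exact this.2 (Sym2.mem_mk_left a t)
  refine hcrit L hLsub hLne hLneq ?_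
  intro u v huv
  rw [SimpleGraph.fromEdgeSet_adj] at huv
  obtain ⟨⟨hGe, hna⟩, huvne⟩ := huv
  rw [Sym2.mem_iff] at hna
  push_neg at hna
  have hua : u ≠ a := fun he => hna.1 he.symm
  have hva : v ≠ a := fun he => hna.2 he.symm
  have hsub : ({u, v, a} : Set V)ᶜ ⊆ {w : V | (SimpleGraph.fromEdgeSet L).Adj u w ∧
      (SimpleGraph.fromEdgeSet L).Adj v w} := by
    intro w hw
    simp only [Set.mem_compl_iff, Set.mem_insert_iff, Set.mem_singleton_iff] at hw
    push_neg at hw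
    obtain ⟨hwu, hwv, hwa⟩ := hw
    constructor
    · rw [SimpleGraph.fromEdgeSet_adj]
      refine ⟨⟨G.mem_edgeSet.mpr (ha u w hua hwa (Ne.symm hwu)), ?_⟩, Ne.symm hwu⟩
      rw [Sym2.mem_iff]; push_neg
      exact ⟨Ne.symm hua, Ne.symm hwa⟩
    · rw [SimpleGraph.fromEdgeSet_adj]
      refine ⟨⟨G.mem_edgeSet.mpr (ha v w hva hwa (Ne.symm hwv)), ?_⟩, Ne.symm hwv⟩
      rw [Sym2.mem_iff]; push_neg
      exact ⟨Ne.symm hva, Ne.symm hwa⟩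
  have h3 : ({u, v, a} : Set V).ncard = 3 := by
    rw [Set.ncard_insert_of_notMem (by simp [huvne, hua]),
      Set.ncard_insert_of_notMem (by simp [hva]), Set.ncard_singleton]
  have hcompl := Set.ncard_add_ncard_compl ({u, v, a} : Set V)
  have hle := Set.ncard_le_ncard hsub (Set.toFinite _)
  omega
end

section
/- In a critical k-truss with more than k+3 vertices, every vertex has degree at least k+2. -/
theorem critical_truss_min_degree {V : Type*} [Fintype V]
    (G : SimpleGraph V) [DecidableRel G.Adj] (k : ℕ)
    (h : G.IsCriticalTruss k) (hcard : k + 3 < Fintype.card V) (v : V) :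
    k + 2 ≤ G.degree v := by
  classical
  by_contra hlt
  push_neg at hlt
  obtain ⟨⟨hiso, htri⟩, hcrit⟩ := h
  obtain ⟨u, hu⟩ := hiso v
  set N := G.neighborSet v with hN
  have hNfin : N.Finite := Set.toFinite _
  have hNcard : N.ncard = G.degree v := by
    rw [Set.ncard_eq_toFinset_card']
    simp [hN, SimpleGraph.degree, SimpleGraph.neighborFinset]
  -- every common-neighbor set of v and a neighbor u' equals N \ {u'}
  have key : ∀ u', G.Adj v u' → {w : V | G.Adj v w ∧ G.Adj u' w} = N \ {u'} := by
    intro u' hu'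
    have hsub : {w : V | G.Adj v w ∧ G.Adj u' w} ⊆ N \ {u'} := by
      rintro w ⟨h1, h2⟩
      exact ⟨h1, fun hw => G.irrefl (hw ▸ h2)⟩
    have hmem : u' ∈ N := hu'
    have hd : (N \ {u'}).ncard = G.degree v - 1 := by
      rw [Set.ncard_diff_singleton_of_mem hmem, hNcard]
    have hk : k ≤ {w : V | G.Adj v w ∧ G.Adj u' w}.ncard := htri hu'
    have hle : (N \ {u'}).ncard ≤ {w : V | G.Adj v w ∧ G.Adj u' w}.ncard := by
      rw [hd]; omega
    exact Set.eq_of_subset_of_ncard_le hsub hle (hNfin.diff)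
  -- degree is exactly k + 1
  have hdeg : G.degree v = k + 1 := by
    have hk : k ≤ {w : V | G.Adj v w ∧ G.Adj u w}.ncard := htri hu
    rw [key u hu] at hk
    have h1 : (N \ {u}).ncard = N.ncard - 1 :=
      Set.ncard_diff_singleton_of_mem (show u ∈ N from hu)
    have hpos : 0 < N.ncard := (Set.ncard_pos hNfin).mpr ⟨u, hu⟩
    omega
  set S : Set V := insert v N with hS
  have hSfin : S.Finite := Set.toFinite _
  have hvN : v ∉ N := fun hv => G.irrefl hv
  have hScard : S.ncard = k + 2 := by
    rw [hS, Set.ncard_insert_of_notMem hvN hNfin, hNcard, hdeg]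
  -- S is a clique
  have hclique : ∀ a ∈ S, ∀ b ∈ S, a ≠ b → G.Adj a b := by
    intro a haS b hbS hab
    rcases haS with ha | ha <;> rcases hbS with hb | hb
    · exact absurd (ha.trans hb.symm) hab
    · rw [ha]; exact hb
    · rw [hb]; exact (ha : G.Adj v a).symm
    · have hb' : b ∈ {w : V | G.Adj v w ∧ G.Adj a w} := by
        rw [key a ha]
        exact ⟨hb, fun hw => hab ((Set.mem_singleton_iff.mp hw).symm)⟩
      exact hb'.2
  -- the clique edge set
  set L : Set (Sym2 V) := {e : Sym2 V | ∃ a ∈ S, ∃ b ∈ S, a ≠ b ∧ e = s(a, b)}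
    with hL
  have hLsub : L ⊆ G.edgeSet := by
    rintro e ⟨a, ha, b, hb, hab, rfl⟩
    exact hclique a ha b hb hab
  have hvS : v ∈ S := Set.mem_insert _ _
  have huS : u ∈ S := Set.mem_insert_of_mem _ hu
  have hLne : L.Nonempty :=
    ⟨s(v, u), v, hvS, u, huS, G.ne_of_adj hu, rfl⟩
  -- there is a vertex outside S
  obtain ⟨x, hx⟩ : ∃ x, x ∉ S := by
    by_contra hall
    push_neg at hall
    have : S = Set.univ := Set.eq_univ_of_forall hall
    rw [this, Set.ncard_univ, Nat.card_eq_fintype_card] at hScard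
    omega
  obtain ⟨y, hy⟩ := hiso x
  have hLneq : L ≠ G.edgeSet := by
    intro heq
    have : s(x, y) ∈ L := heq ▸ (G.mem_edgeSet.mpr hy)
    obtain ⟨a, ha, b, hb, hab, habe⟩ := this
    rcases Sym2.eq_iff.mp habe with ⟨rfl, rfl⟩ | ⟨rfl, rfl⟩
    · exact hx ha
    · exact hx hb
  refine hcrit L hLsub hLne hLneq ?_
  intro a b hab
  rw [SimpleGraph.fromEdgeSet_adj] at hab
  obtain ⟨heL, hne⟩ := hab
  obtain ⟨a', ha', b', hb', hab', habe⟩ := heL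
  have haS : a ∈ S ∧ b ∈ S := by
    rcases Sym2.eq_iff.mp habe with ⟨rfl, rfl⟩ | ⟨rfl, rfl⟩
    · exact ⟨ha', hb'⟩
    · exact ⟨hb', ha'⟩
  have hsub : S \ {a, b} ⊆
      {w : V | (SimpleGraph.fromEdgeSet L).Adj a w ∧
        (SimpleGraph.fromEdgeSet L).Adj b w} := by
    rintro w ⟨hwS, hw⟩
    simp only [Set.mem_insert_iff, Set.mem_singleton_iff, not_or] at hw
    constructor
    · rw [SimpleGraph.fromEdgeSet_adj]
      exact ⟨⟨a, haS.1, w, hwS, fun e => hw.1 e.symm, rfl⟩, fun e => hw.1 e.symm⟩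
    · rw [SimpleGraph.fromEdgeSet_adj]
      exact ⟨⟨b, haS.2, w, hwS, fun e => hw.2 e.symm, rfl⟩, fun e => hw.2 e.symm⟩
  have hdcard : (S \ {a, b}).ncard = k := by
    have hpair : ({a, b} : Set V) ⊆ S := by
      rintro z (rfl | hz)
      · exact haS.1
      · exact (Set.mem_singleton_iff.mp hz) ▸ haS.2
    rw [Set.ncard_diff hpair, Set.ncard_pair hne, hScard]
    omega
  calc k = (S \ {a, b}).ncard := hdcard.symm
    _ ≤ _ := Set.ncard_le_ncard hsub (Set.toFinite _)
end

section
/- Every critical 2-truss on n vertices has at least 3n − 6 edges. -/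
set_option linter.unusedSectionVars false

open Finset

namespace TrussProof

abbrev F2 := ZMod 2

variable {V : Type*} [Fintype V] [DecidableEq V] (G : SimpleGraph V) [DecidableRel G.Adj]

/-- The set of triangles of `G`, as 3-cliques. -/
def triSet : Set (Finset V) := {s | G.IsNClique 3 s}

instance : Fintype (triSet G) := by unfold triSet; infer_instance

/-- The triangle-edge incidence map. -/
noncomputable def tmap : ((triSet G) → F2) →ₗ[F2] (G.edgeSet → F2) where
  toFun x e := ∑ t : triSet G, (if (e : Sym2 V) ∈ (t : Finset V).sym2 then 1 else 0) * x t
  map_add' x y := by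
    funext e
    simp [mul_add, Finset.sum_add_distrib]
  map_smul' c x := by
    funext e
    simp [Finset.mul_sum]

/-- The vertex-edge incidence map. -/
noncomputable def bmap : (G.edgeSet → F2) →ₗ[F2] (V → F2) where
  toFun y v := ∑ e : G.edgeSet, (if v ∈ (e : Sym2 V) then 1 else 0) * y e
  map_add' x y := by
    funext v
    simp [mul_add, Finset.sum_add_distrib]
  map_smul' c x := by
    funext v
    simp [Finset.mul_sum]

variable {G}

lemma tmap_apply (x : triSet G → F2) (e : G.edgeSet) :
    tmap G x e = ∑ t : triSet G, (if (e : Sym2 V) ∈ (t : Finset V).sym2 then 1 else 0) * x t :=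
  rfl

lemma bmap_apply (y : G.edgeSet → F2) (v : V) :
    bmap G y v = ∑ e : G.edgeSet, (if v ∈ (e : Sym2 V) then 1 else 0) * y e :=
  rfl

lemma tri_edges {a b c : V} (hab : G.Adj a b) (hac : G.Adj a c) (hbc : G.Adj b c)
    {e : Sym2 V} (he : e ∈ G.edgeSet) :
    e ∈ ({a, b, c} : Finset V).sym2 ↔ e = s(a, b) ∨ e = s(a, c) ∨ e = s(b, c) := by
  constructor
  · induction e with
    | _ u v =>
      intro hm
      rw [Finset.mk_mem_sym2_iff] at hm
      obtain ⟨hu, hv⟩ := hm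
      have huv : u ≠ v := (G.ne_of_adj he)
      simp only [Finset.mem_insert, Finset.mem_singleton] at hu hv
      rcases hu with rfl | rfl | rfl <;> rcases hv with rfl | rfl | rfl <;>
        simp_all [Sym2.eq_swap]
  · rintro (rfl | rfl | rfl) <;> simp [Finset.mk_mem_sym2_iff]

end TrussProof

namespace TrussProof2
open TrussProof
set_option linter.unusedSectionVars false

variable {V : Type*} [Fintype V] [DecidableEq V] {G : SimpleGraph V} [DecidableRel G.Adj]

lemma filter_tri {a b c : V} (hab : G.Adj a b) (hac : G.Adj a c) (hbc : G.Adj b c) :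
    (univ.filter fun e : G.edgeSet => (e : Sym2 V) ∈ ({a, b, c} : Finset V).sym2) =
      {⟨s(a, b), hab⟩, ⟨s(a, c), hac⟩, ⟨s(b, c), hbc⟩} := by
  ext e
  simp only [Finset.mem_filter, Finset.mem_univ, true_and, Finset.mem_insert,
    Finset.mem_singleton, ← Subtype.val_inj]
  exact tri_edges hab hac hbc e.2

lemma card_tri_edges {a b c : V} (hab : G.Adj a b) (hac : G.Adj a c) (hbc : G.Adj b c) :
    (univ.filter fun e : G.edgeSet => (e : Sym2 V) ∈ ({a, b, c} : Finset V).sym2).card = 3 := by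
  rw [filter_tri hab hac hbc]
  have h1 : a ≠ b := hab.ne
  have h2 : a ≠ c := hac.ne
  have h3 : b ≠ c := hbc.ne
  rw [Finset.card_insert_of_notMem, Finset.card_insert_of_notMem, Finset.card_singleton] <;>
    simp [← Subtype.val_inj, Sym2.eq_iff] <;> tauto

lemma sum_tri_vertex {a b c : V} (hab : G.Adj a b) (hac : G.Adj a c) (hbc : G.Adj b c) (v : V) :
    ∑ e : G.edgeSet, (if v ∈ (e : Sym2 V) then (1 : F2) else 0) *
      (if (e : Sym2 V) ∈ ({a, b, c} : Finset V).sym2 then 1 else 0) = 0 := by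
  have h1 : a ≠ b := hab.ne
  have h2 : a ≠ c := hac.ne
  have h3 : b ≠ c := hbc.ne
  have : ∀ e : G.edgeSet, (if v ∈ (e : Sym2 V) then (1 : F2) else 0) *
      (if (e : Sym2 V) ∈ ({a, b, c} : Finset V).sym2 then 1 else 0) =
      if (e : Sym2 V) ∈ ({a, b, c} : Finset V).sym2 then
        (if v ∈ (e : Sym2 V) then (1 : F2) else 0) else 0 := by
    intro e; split_ifs <;> simp
  rw [Finset.sum_congr rfl fun e _ => this e, ← Finset.sum_filter, filter_tri hab hac hbc]
  rw [Finset.sum_insert, Finset.sum_insert, Finset.sum_singleton]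
  · simp only [Sym2.mem_iff]
    by_cases hva : v = a <;> by_cases hvb : v = b <;> by_cases hvc : v = c <;>
      simp_all <;> decide
  · simp [← Subtype.val_inj, Sym2.eq_iff]; tauto
  · simp [← Subtype.val_inj, Sym2.eq_iff]; tauto

end TrussProof2

namespace TrussProof3
open TrussProof TrussProof2
set_option linter.unusedSectionVars false

variable {V : Type*} [Fintype V] [DecidableEq V] {G : SimpleGraph V} [DecidableRel G.Adj]

lemma range_tmap_le_ker_bmap : LinearMap.range (tmap G) ≤ LinearMap.ker (bmap G) := by
  rintro y ⟨x, rfl⟩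
  rw [LinearMap.mem_ker]
  funext v
  show ∑ e : G.edgeSet, (if v ∈ (e : Sym2 V) then (1 : F2) else 0) *
      (∑ t : triSet G, (if (e : Sym2 V) ∈ (t : Finset V).sym2 then 1 else 0) * x t) = 0
  simp_rw [Finset.mul_sum]
  rw [Finset.sum_comm]
  have key : ∀ t : triSet G, ∑ e : G.edgeSet,
      (if v ∈ (e : Sym2 V) then (1 : F2) else 0) *
        ((if (e : Sym2 V) ∈ (t : Finset V).sym2 then 1 else 0) * x t) = 0 := by
    intro t
    obtain ⟨a, b, c, hab, hac, hbc, hrep⟩ := SimpleGraph.is3Clique_iff.1 t.2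
    calc ∑ e : G.edgeSet, (if v ∈ (e : Sym2 V) then (1 : F2) else 0) *
        ((if (e : Sym2 V) ∈ (t : Finset V).sym2 then 1 else 0) * x t)
        = (∑ e : G.edgeSet, (if v ∈ (e : Sym2 V) then (1 : F2) else 0) *
            (if (e : Sym2 V) ∈ (t : Finset V).sym2 then 1 else 0)) * x t := by
          rw [Finset.sum_mul]; congr 1; funext e; ring
      _ = 0 := by rw [hrep, sum_tri_vertex hab hac hbc v, zero_mul]
  rw [Finset.sum_congr rfl fun t _ => key t, Finset.sum_const_zero]

end TrussProof3


namespace TrussProof4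
open TrussProof TrussProof2 TrussProof3 Module Submodule
set_option linter.unusedSectionVars false

variable {V : Type*} [Fintype V] [DecidableEq V] {G : SimpleGraph V} [DecidableRel G.Adj]

lemma fun_add_self (x : V → F2) : x + x = 0 := by
  funext v; exact CharTwo.add_self_eq_zero _

lemma bmap_single {a b : V} (hab : G.Adj a b) :
    bmap G (Pi.single (⟨s(a, b), hab⟩ : G.edgeSet) 1) = Pi.single a 1 + Pi.single b 1 := by
  funext v
  rw [bmap_apply, Finset.sum_eq_single (⟨s(a, b), hab⟩ : G.edgeSet)]
  · have : a ≠ b := hab.ne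
    simp only [Pi.single_eq_same, mul_one, Sym2.mem_iff, Pi.add_apply, Pi.single_apply]
    by_cases hva : v = a <;> by_cases hvb : v = b <;> simp_all <;> decide
  · intro e _ he
    rw [Pi.single_eq_of_ne he, mul_zero]
  · simp

lemma add_cancel_mid (x y z : V → F2) : (x + y) + (y + z) = x + z := by
  rw [add_assoc, ← add_assoc y y z, fun_add_self, zero_add]

lemma reach_mem {u w : V} (h : G.Reachable u w) :
    Pi.single u (1 : F2) + Pi.single w 1 ∈ LinearMap.range (bmap G) := by
  obtain ⟨p⟩ := h
  induction p with
  | nil => rw [fun_add_self]; exact Submodule.zero_mem _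
  | cons hadj p ih =>
    rename_i u u' w
    have h1 : Pi.single u (1 : F2) + Pi.single u' 1 ∈ LinearMap.range (bmap G) :=
      ⟨_, bmap_single hadj⟩
    have := Submodule.add_mem _ h1 ih
    rwa [add_cancel_mid] at this

lemma card_le_rank_bmap [Nonempty V] (hconn : G.Preconnected) :
    Fintype.card V ≤ finrank F2 (LinearMap.range (bmap G)) + 1 := by
  classical
  obtain ⟨v0⟩ := ‹Nonempty V›
  set U := LinearMap.range (bmap G) with hU
  set W : Submodule F2 (V → F2) := F2 ∙ (Pi.single v0 1 : V → F2) with hW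
  have hsingle : ∀ u : V, Pi.single u (1 : F2) ∈ U ⊔ W := by
    intro u
    have h1 : Pi.single u (1 : F2) + Pi.single v0 1 ∈ U := reach_mem (hconn u v0)
    have h2 : (Pi.single v0 1 : V → F2) ∈ W := Submodule.mem_span_singleton_self _
    have h3 := Submodule.add_mem _ (Submodule.mem_sup_left h1) (Submodule.mem_sup_right h2)
    rwa [add_assoc, fun_add_self, add_zero] at h3
  have hsum : ∀ i : V, (fun j => if i = j then (1 : F2) else 0) = Pi.single i 1 := by
    intro i; funext j
    rw [Pi.single_apply]
    by_cases h : i = j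
    · subst h; simp
    · rw [if_neg h, if_neg fun hji => h hji.symm]
  have htop : (⊤ : Submodule F2 (V → F2)) = U ⊔ W := by
    refine le_antisymm ?_ le_top
    intro x _
    rw [pi_eq_sum_univ x]
    exact Submodule.sum_mem _ fun i _ => Submodule.smul_mem _ _ (hsum i ▸ hsingle i)
  have h1 : finrank F2 (V → F2) = Fintype.card V := Module.finrank_pi F2
  have h2 : finrank F2 (⊤ : Submodule F2 (V → F2)) = Fintype.card V := by
    rw [finrank_top, h1]
  have h3 := Submodule.finrank_sup_add_finrank_inf_eq U W
  have h4 : finrank F2 W ≤ 1 := by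
    have hz : (Pi.single v0 1 : V → F2) ≠ 0 := by
      intro hcon
      have := congrFun hcon v0
      simp at this
    rw [hW, finrank_span_singleton hz]
  have h5 : finrank F2 ↥(U ⊔ W) = Fintype.card V := by rw [← htop, h2]
  omega

end TrussProof4

namespace TrussProof5
open TrussProof TrussProof2 TrussProof3 TrussProof4
set_option linter.unusedSectionVars false

variable {V : Type*} [Fintype V] [DecidableEq V] {G : SimpleGraph V} [DecidableRel G.Adj]

lemma double_count (S : Finset (triSet G)) :
    ∑ e : G.edgeSet, (S.filter (fun t : triSet G => (e : Sym2 V) ∈ (t : Finset V).sym2)).card =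
      3 * S.card := by
  simp_rw [Finset.card_filter]
  rw [Finset.sum_comm]
  have key : ∀ t ∈ S, (∑ e : G.edgeSet,
      if (e : Sym2 V) ∈ (t : Finset V).sym2 then 1 else 0) = 3 := by
    intro t _
    obtain ⟨a, b, c, hab, hac, hbc, hrep⟩ := SimpleGraph.is3Clique_iff.1 t.2
    rw [← Finset.card_filter]
    rw [show ((t : Finset V) = {a, b, c}) from hrep]
    exact card_tri_edges hab hac hbc
  rw [Finset.sum_congr rfl key, Finset.sum_const, smul_eq_mul, mul_comm]

lemma third_vertex {t : triSet G} {u v : V} (huv : G.Adj u v)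
    (hm : s(u, v) ∈ (t : Finset V).sym2) :
    ∃ w, (t : Finset V) = {u, v, w} ∧ G.Adj u w ∧ G.Adj v w := by
  rw [Finset.mk_mem_sym2_iff] at hm
  obtain ⟨hu, hv⟩ := hm
  have hcard : (t : Finset V).card = 3 := t.2.2
  have hsub : ({u, v} : Finset V) ⊆ (t : Finset V) := by
    intro x hx; simp only [Finset.mem_insert, Finset.mem_singleton] at hx
    rcases hx with rfl | rfl <;> assumption
  have hcard2 : ({u, v} : Finset V).card = 2 := Finset.card_pair huv.ne
  have hsd : ((t : Finset V) \ {u, v}).card = 1 := by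
    rw [Finset.card_sdiff_of_subset hsub, hcard, hcard2]
  obtain ⟨w, hw⟩ := Finset.card_eq_one.1 hsd
  have hwmem : w ∈ (t : Finset V) \ {u, v} := by rw [hw]; exact Finset.mem_singleton_self w
  have hwt : w ∈ (t : Finset V) := (Finset.mem_sdiff.1 hwmem).1
  have hwuv : w ≠ u ∧ w ≠ v := by
    have := (Finset.mem_sdiff.1 hwmem).2
    simp only [Finset.mem_insert, Finset.mem_singleton, not_or] at this
    exact this
  have hrep : (t : Finset V) = {u, v, w} := by
    apply Finset.eq_of_subset_of_card_le
    · intro x hx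
      by_cases hxu : x = u
      · simp [hxu]
      by_cases hxv : x = v
      · simp [hxv]
      have : x ∈ (t : Finset V) \ {u, v} := by
        rw [Finset.mem_sdiff]
        exact ⟨hx, by simp [hxu, hxv]⟩
      rw [hw, Finset.mem_singleton] at this
      simp [this]
    · rw [hcard]
      apply le_trans (Finset.card_insert_le _ _)
      apply Nat.succ_le_succ
      apply le_trans (Finset.card_insert_le _ _)
      simp
  have hclique := t.2.1
  have hadj_uw : G.Adj u w := hclique (Finset.mem_coe.2 hu) (Finset.mem_coe.2 hwt)
      fun hcon => hwuv.1 hcon.symm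
  have hadj_vw : G.Adj v w := hclique (Finset.mem_coe.2 hv) (Finset.mem_coe.2 hwt)
      fun hcon => hwuv.2 hcon.symm
  exact ⟨w, hrep, hadj_uw, hadj_vw⟩

lemma per_edge_truss (h2 : G.EveryEdgeInTriangles 2) (e : G.edgeSet) :
    2 ≤ (univ.filter fun t : triSet G => (e : Sym2 V) ∈ (t : Finset V).sym2).card := by
  obtain ⟨ev, he⟩ := e
  induction ev with
  | _ u v =>
    have huv : G.Adj u v := G.mem_edgeSet.1 he
    have hnc := h2 huv
    have hfin : {w : V | G.Adj u w ∧ G.Adj v w}.Finite := Set.toFinite _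
    obtain ⟨w1, hw1, w2, hw2, hne⟩ := (Set.one_lt_ncard hfin).1 (by omega)
    have ht1 : ({u, v, w1} : Finset V) ∈ triSet G :=
      SimpleGraph.is3Clique_iff.2 ⟨u, v, w1, huv, hw1.1, hw1.2, rfl⟩
    have ht2 : ({u, v, w2} : Finset V) ∈ triSet G :=
      SimpleGraph.is3Clique_iff.2 ⟨u, v, w2, huv, hw2.1, hw2.2, rfl⟩
    rw [← Nat.lt_iff_add_one_le, Finset.one_lt_card]
    refine ⟨⟨_, ht1⟩, ?_, ⟨_, ht2⟩, ?_, ?_⟩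
    · simp [Finset.mk_mem_sym2_iff]
    · simp [Finset.mk_mem_sym2_iff]
    · intro hcon
      rw [Subtype.mk_eq_mk] at hcon
      have : w1 ∈ ({u, v, w2} : Finset V) := by
        rw [← hcon]; simp
      simp only [Finset.mem_insert, Finset.mem_singleton] at this
      rcases this with rfl | rfl | rfl
      · exact hw1.1.ne' rfl
      · exact hw1.2.ne' rfl
      · exact hne rfl

end TrussProof5

namespace TrussProof6
open TrussProof TrussProof2 TrussProof3 TrussProof4 TrussProof5
set_option linter.unusedSectionVars false

variable {V : Type*} [Fintype V] [DecidableEq V] {G : SimpleGraph V} [DecidableRel G.Adj]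

lemma f2_ne_zero {a : F2} (ha : a ≠ 0) : a = 1 := by
  revert ha; revert a; decide

lemma preconnected_of_critical (h : G.IsCriticalTruss 2) : G.Preconnected := by
  intro u w
  set L : Set (Sym2 V) := {e | e ∈ G.edgeSet ∧ ∀ z ∈ e, G.Reachable u z} with hL
  have hsub : L ⊆ G.edgeSet := fun e he => he.1
  have hne : L.Nonempty := by
    obtain ⟨u', hu'⟩ := h.1.1 u
    refine ⟨s(u, u'), G.mem_edgeSet.2 hu', ?_⟩
    intro z hz
    rw [Sym2.mem_iff] at hz
    rcases hz with rfl | rfl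
    · exact SimpleGraph.Reachable.refl _
    · exact hu'.reachable
  have htruss : (SimpleGraph.fromEdgeSet L).EveryEdgeInTriangles 2 := by
    intro a b hab
    rw [SimpleGraph.fromEdgeSet_adj] at hab
    obtain ⟨⟨habE, hreach⟩, hne'⟩ := hab
    have hGab : G.Adj a b := G.mem_edgeSet.1 habE
    have hra : G.Reachable u a := hreach a (Sym2.mem_mk_left a b)
    have hsubset : {w : V | G.Adj a w ∧ G.Adj b w} ⊆
        {w : V | (SimpleGraph.fromEdgeSet L).Adj a w ∧ (SimpleGraph.fromEdgeSet L).Adj b w} := by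
      intro w' ⟨haw, hbw⟩
      have hrw : G.Reachable u w' := hra.trans haw.reachable
      have hrb : G.Reachable u b := hra.trans hGab.reachable
      constructor
      · rw [SimpleGraph.fromEdgeSet_adj]
        refine ⟨⟨G.mem_edgeSet.2 haw, ?_⟩, haw.ne⟩
        intro z hz; rw [Sym2.mem_iff] at hz
        rcases hz with rfl | rfl
        · exact hra
        · exact hrw
      · rw [SimpleGraph.fromEdgeSet_adj]
        refine ⟨⟨G.mem_edgeSet.2 hbw, ?_⟩, hbw.ne⟩
        intro z hz; rw [Sym2.mem_iff] at hz
        rcases hz with rfl | rfl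
        · exact hrb
        · exact hrw
    calc (2 : ℕ) ≤ {w : V | G.Adj a w ∧ G.Adj b w}.ncard := h.1.2 hGab
      _ ≤ _ := Set.ncard_le_ncard hsubset (Set.toFinite _)
  have hLE : L = G.edgeSet := by
    by_contra hcon
    exact h.2 L hsub hne hcon htruss
  obtain ⟨w', hw'⟩ := h.1.1 w
  have : s(w, w') ∈ L := by rw [hLE]; exact G.mem_edgeSet.2 hw'
  exact this.2 w (Sym2.mem_mk_left w w')

lemma parity_card {x : triSet G → F2} (hx : tmap G x = 0) (e : G.edgeSet) :
    2 ∣ (((univ.filter fun t : triSet G => x t ≠ 0).filter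
      (fun t : triSet G => (e : Sym2 V) ∈ (t : Finset V).sym2)).card) := by
  have h0 := congrFun hx e
  rw [tmap_apply] at h0
  simp only [ite_mul, one_mul, zero_mul] at h0
  rw [← Finset.sum_filter, ← Finset.sum_filter_ne_zero] at h0
  rw [Finset.filter_comm] at h0
  have hone : ∀ t ∈ (univ.filter fun t : triSet G => x t ≠ 0).filter
      (fun t : triSet G => (e : Sym2 V) ∈ (t : Finset V).sym2), x t = 1 := by
    intro t ht
    exact f2_ne_zero (Finset.mem_filter.1 (Finset.mem_filter.1 ht).1).2
  rw [Finset.sum_congr rfl hone, Finset.sum_const, nsmul_eq_mul, mul_one] at h0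
  exact (ZMod.natCast_eq_zero_iff _ 2).1 h0

lemma ker_weight (h : G.IsCriticalTruss 2) {x : triSet G → F2} (hx : tmap G x = 0)
    (hx0 : x ≠ 0) :
    2 * Fintype.card G.edgeSet ≤ 3 * (univ.filter fun t : triSet G => x t ≠ 0).card := by
  set S := univ.filter fun t : triSet G => x t ≠ 0 with hS
  set L : Set (Sym2 V) :=
    {e | e ∈ G.edgeSet ∧ ∃ t ∈ S, e ∈ (t : Finset V).sym2} with hL
  have hsub : L ⊆ G.edgeSet := fun e he => he.1
  have hne : L.Nonempty := by
    have : ∃ t : triSet G, x t ≠ 0 := by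
      by_contra hcon
      push_neg at hcon
      exact hx0 (funext fun t => hcon t)
    obtain ⟨t, ht⟩ := this
    obtain ⟨a, b, c, hab, hac, hbc, hrep⟩ := SimpleGraph.is3Clique_iff.1 t.2
    refine ⟨s(a, b), G.mem_edgeSet.2 hab, t, ?_, ?_⟩
    · rw [hS]; simp [ht]
    · rw [hrep, Finset.mk_mem_sym2_iff]; simp
  -- every edge of L is in ≥ 2 triangles of the subgraph on L
  have htruss : (SimpleGraph.fromEdgeSet L).EveryEdgeInTriangles 2 := by
    intro a b hab
    rw [SimpleGraph.fromEdgeSet_adj] at hab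
    obtain ⟨⟨habE, t0, ht0S, ht0m⟩, hne'⟩ := hab
    have hGab : G.Adj a b := G.mem_edgeSet.1 habE
    set eab : G.edgeSet := ⟨s(a, b), habE⟩ with heab
    have hpar := parity_card hx eab
    rw [← hS] at hpar
    have hpos : 0 < (S.filter (fun t : triSet G =>
        (eab : Sym2 V) ∈ (t : Finset V).sym2)).card := by
      rw [Finset.card_pos]
      exact ⟨t0, Finset.mem_filter.2 ⟨ht0S, ht0m⟩⟩
    have h2le : 2 ≤ (S.filter (fun t : triSet G =>
        (eab : Sym2 V) ∈ (t : Finset V).sym2)).card := Nat.le_of_dvd hpos hpar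
    have h1lt : 1 < (S.filter (fun t : triSet G =>
        (eab : Sym2 V) ∈ (t : Finset V).sym2)).card := by omega
    obtain ⟨t1, ht1, t2, ht2, htne⟩ := Finset.one_lt_card.1 h1lt
    obtain ⟨ht1S, ht1m⟩ := Finset.mem_filter.1 ht1
    obtain ⟨ht2S, ht2m⟩ := Finset.mem_filter.1 ht2
    obtain ⟨w1, hrep1, haw1, hbw1⟩ := third_vertex hGab ht1m
    obtain ⟨w2, hrep2, haw2, hbw2⟩ := third_vertex hGab ht2m
    have hwne : w1 ≠ w2 := by
      rintro rfl
      exact htne (Subtype.ext (hrep1.trans hrep2.symm))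
    have hmem : ∀ (t : triSet G) (w' : V), t ∈ S → (t : Finset V) = {a, b, w'} →
        G.Adj a w' → G.Adj b w' →
        w' ∈ {w : V | (SimpleGraph.fromEdgeSet L).Adj a w ∧
          (SimpleGraph.fromEdgeSet L).Adj b w} := by
      intro t w' htS hrep haw hbw
      constructor
      · rw [SimpleGraph.fromEdgeSet_adj]
        refine ⟨⟨G.mem_edgeSet.2 haw, t, htS, ?_⟩, haw.ne⟩
        rw [hrep, Finset.mk_mem_sym2_iff]; simp
      · rw [SimpleGraph.fromEdgeSet_adj]
        refine ⟨⟨G.mem_edgeSet.2 hbw, t, htS, ?_⟩, hbw.ne⟩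
        rw [hrep, Finset.mk_mem_sym2_iff]; simp
    rw [← Nat.lt_iff_add_one_le, Set.one_lt_ncard (Set.toFinite _)]
    exact ⟨w1, hmem t1 w1 ht1S hrep1 haw1 hbw1, w2, hmem t2 w2 ht2S hrep2 haw2 hbw2, hwne⟩
  have hLE : L = G.edgeSet := by
    by_contra hcon
    exact h.2 L hsub hne hcon htruss
  -- per-edge lower bound 2
  have hper : ∀ e : G.edgeSet, 2 ≤ (S.filter (fun t : triSet G =>
      (e : Sym2 V) ∈ (t : Finset V).sym2)).card := by
    intro e
    have heL : (e : Sym2 V) ∈ L := by rw [hLE]; exact e.2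
    obtain ⟨-, t0, ht0S, ht0m⟩ := heL
    have hpos : 0 < (S.filter (fun t : triSet G =>
        (e : Sym2 V) ∈ (t : Finset V).sym2)).card := by
      rw [Finset.card_pos]
      exact ⟨t0, Finset.mem_filter.2 ⟨ht0S, ht0m⟩⟩
    have hpar := parity_card hx e
    rw [← hS] at hpar
    exact Nat.le_of_dvd hpos hpar
  calc 2 * Fintype.card G.edgeSet = ∑ _e : G.edgeSet, 2 := by
        rw [Finset.sum_const, Finset.card_univ, smul_eq_mul, mul_comm]
    _ ≤ ∑ e : G.edgeSet, (S.filter (fun t : triSet G =>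
          (e : Sym2 V) ∈ (t : Finset V).sym2)).card := Finset.sum_le_sum fun e _ => hper e
    _ = 3 * S.card := double_count S

lemma truss_weight (h2 : G.EveryEdgeInTriangles 2) :
    2 * Fintype.card G.edgeSet ≤ 3 * Fintype.card (triSet G) := by
  calc 2 * Fintype.card G.edgeSet = ∑ _e : G.edgeSet, 2 := by
        rw [Finset.sum_const, Finset.card_univ, smul_eq_mul, mul_comm]
    _ ≤ ∑ e : G.edgeSet, ((univ : Finset (triSet G)).filter (fun t : triSet G =>
          (e : Sym2 V) ∈ (t : Finset V).sym2)).card :=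
        Finset.sum_le_sum fun e _ => per_edge_truss h2 e
    _ = 3 * (univ : Finset (triSet G)).card := double_count univ
    _ = 3 * Fintype.card (triSet G) := by rw [Finset.card_univ]

end TrussProof6

namespace TrussProof7
open TrussProof TrussProof2 TrussProof3 TrussProof4 TrussProof5 TrussProof6 Module
set_option linter.unusedSectionVars false

variable {V : Type*} [Fintype V] [DecidableEq V] {G : SimpleGraph V} [DecidableRel G.Adj]

lemma singleton_bound (hd : 1 ≤ finrank F2 (LinearMap.ker (tmap G))) :
    ∃ x : triSet G → F2, tmap G x = 0 ∧ x ≠ 0 ∧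
      (univ.filter fun t : triSet G => x t ≠ 0).card +
        finrank F2 (LinearMap.ker (tmap G)) ≤ Fintype.card (triSet G) + 1 := by
  classical
  set d := finrank F2 (LinearMap.ker (tmap G)) with hd'
  have hdN : d ≤ Fintype.card (triSet G) := by
    have h1 := Submodule.finrank_le (LinearMap.ker (tmap G))
    rwa [Module.finrank_pi] at h1
  obtain ⟨Sf, -, hScard⟩ := Finset.exists_subset_card_eq (s := (univ : Finset (triSet G))) (n := d - 1)
    (by rw [Finset.card_univ]; omega)
  let ψ : ↥(LinearMap.ker (tmap G)) →ₗ[F2] (↥Sf → F2) :=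
    { toFun := fun z i => (z : triSet G → F2) i
      map_add' := fun a b => rfl
      map_smul' := fun c a => rfl }
  have hnotinj : ¬ Function.Injective ψ := by
    intro hinj
    have h1 := LinearMap.finrank_le_finrank_of_injective hinj
    rw [Module.finrank_pi, Fintype.card_coe, hScard] at h1
    omega
  have hker : LinearMap.ker ψ ≠ ⊥ := fun hcon => hnotinj (LinearMap.ker_eq_bot.1 hcon)
  obtain ⟨z, hzker, hz0⟩ := (Submodule.ne_bot_iff _).1 hker
  refine ⟨(z : triSet G → F2), z.2, ?_, ?_⟩
  · intro hcon
    exact hz0 (Subtype.ext hcon)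
  · have hzero : ∀ t ∈ Sf, (z : triSet G → F2) t = 0 := by
      intro t ht
      have := congrFun (LinearMap.mem_ker.1 hzker) ⟨t, ht⟩
      exact this
    have hsub : (univ.filter fun t : triSet G => (z : triSet G → F2) t ≠ 0) ⊆ univ \ Sf := by
      intro t ht
      rw [Finset.mem_sdiff]
      refine ⟨Finset.mem_univ t, fun hmem => ?_⟩
      exact (Finset.mem_filter.1 ht).2 (hzero t hmem)
    have hcard := Finset.card_le_card hsub
    rw [Finset.card_sdiff_of_subset (Finset.subset_univ Sf), Finset.card_univ, hScard] at hcard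
    omega

end TrussProof7

open TrussProof TrussProof2 TrussProof3 TrussProof4 TrussProof5 TrussProof6 TrussProof7 Module

theorem critical_two_truss_min_edges {V : Type*} [Fintype V]
    (G : SimpleGraph V) (h : G.IsCriticalTruss 2) :
    (3 : ℤ) * (Fintype.card V : ℤ) - 6 ≤ (G.edgeSet.ncard : ℤ) := by
  classical
  rcases isEmpty_or_nonempty V with hV | hV
  · rw [Fintype.card_eq_zero]
    have : (0 : ℤ) ≤ (G.edgeSet.ncard : ℤ) := Int.natCast_nonneg _
    omega
  set m := Fintype.card G.edgeSet with hm
  set N := Fintype.card (triSet G) with hN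
  set r := finrank F2 (LinearMap.range (tmap G)) with hr
  set d := finrank F2 (LinearMap.ker (tmap G)) with hd
  set rb := finrank F2 (LinearMap.range (bmap G)) with hrb
  set kb := finrank F2 (LinearMap.ker (bmap G)) with hkb
  have hrn1 : r + d = N := by
    have := LinearMap.finrank_range_add_finrank_ker (tmap G)
    rwa [Module.finrank_pi] at this
  have hrn2 : rb + kb = m := by
    have := LinearMap.finrank_range_add_finrank_ker (bmap G)
    rwa [Module.finrank_pi] at this
  have hrk : r ≤ kb := Submodule.finrank_mono range_tmap_le_ker_bmap
  have hcardV : Fintype.card V ≤ rb + 1 := card_le_rank_bmap (preconnected_of_critical h)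
  have hcount : ∃ W : ℕ, 2 * m ≤ 3 * W ∧ W + d ≤ N + 1 := by
    rcases Nat.eq_zero_or_pos d with hd0 | hd1
    · exact ⟨N, truss_weight h.1.2, by omega⟩
    · obtain ⟨x, hx, hx0, hxw⟩ := singleton_bound hd1
      exact ⟨(univ.filter fun t : triSet G => x t ≠ 0).card, ker_weight h hx hx0, hxw⟩
  obtain ⟨W, hW1, hW2⟩ := hcount
  have hkey : 3 * Fintype.card V ≤ m + 6 := by omega
  have hncard : G.edgeSet.ncard = m := by
    rw [Set.ncard_eq_toFinset_card', Set.toFinset_card]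
  omega
end

section
/- For every n ≥ 6, the graph consisting of a cycle C of length n−2 together with two additional vertices x1, x2 each adjacent to all vertices of C is a critical 2-truss with n vertices and 3n − 6 edges. -/
/-- The graph consisting of a cycle of length `n - 2` together with two extra
vertices each adjacent to every vertex of the cycle. -/
def cycleWithTwoApexes (n : ℕ) : SimpleGraph (Fin (n - 2) ⊕ Fin 2) :=
  SimpleGraph.fromRel (fun a b =>
    match a, b with
    | .inl i, .inl j => ((i : ℕ) + 1) % (n - 2) = (j : ℕ)
    | .inl _, .inr _ => True
    | _, _ => False)

namespace TwoTrussAux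
open SimpleGraph Sum
open Fin.NatCast Fin.CommRing

def Gm (m : ℕ) : SimpleGraph (Fin m ⊕ Fin 2) :=
  SimpleGraph.fromRel (fun a b =>
    match a, b with
    | .inl i, .inl j => ((i : ℕ) + 1) % m = (j : ℕ)
    | .inl _, .inr _ => True
    | _, _ => False)

lemma cyc_eq (n : ℕ) : cycleWithTwoApexes n = Gm (n - 2) := by
  unfold cycleWithTwoApexes Gm
  congr 1
  funext a b
  cases a <;> cases b <;> rfl

variable {m : ℕ} [NeZero m]

lemma val_add_one (i : Fin m) : ((i + 1 : Fin m) : ℕ) = ((i : ℕ) + 1) % m := by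
  simp only [Fin.add_def, Fin.val_one', Nat.add_mod_mod]

lemma add_nat_ne (i : Fin m) {k : ℕ} (h0 : 0 < k) (h1 : k < m) : i + (k : Fin m) ≠ i := by
  intro h
  have h2 : (k : Fin m) = 0 := by
    have := h.trans (add_zero i).symm
    exact add_left_cancel this
  have hv := congrArg Fin.val h2
  rw [Fin.val_natCast, Nat.mod_eq_of_lt h1] at hv
  simp at hv
  omega

lemma one_ne (hm : 4 ≤ m) (i : Fin m) : i + 1 ≠ i := by
  have := add_nat_ne i (k := 1) (by omega) (by omega)
  simpa using this

lemma two_ne (hm : 4 ≤ m) (i : Fin m) : i + 1 + 1 ≠ i := by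
  have := add_nat_ne i (k := 2) (by omega) (by omega)
  rw [add_assoc]
  convert this using 2
  push_cast
  ring

lemma three_ne (hm : 4 ≤ m) (i : Fin m) : i + 1 + 1 + 1 ≠ i := by
  have := add_nat_ne i (k := 3) (by omega) (by omega)
  rw [add_assoc, add_assoc]
  convert this using 2
  push_cast
  ring

lemma adj_inl_inl (hm : 4 ≤ m) {i j : Fin m} :
    (Gm m).Adj (inl i) (inl j) ↔ i + 1 = j ∨ j + 1 = i := by
  simp only [Gm, fromRel_adj]
  constructor
  · rintro ⟨hne, h | h⟩
    · exact Or.inl (Fin.ext (by rw [val_add_one]; exact h))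
    · exact Or.inr (Fin.ext (by rw [val_add_one]; exact h))
  · intro h
    refine ⟨?_, ?_⟩
    · intro heq
      injection heq with heq
      rcases h with h | h
      · exact one_ne hm i (heq ▸ h)
      · exact one_ne hm j (heq ▸ h)
    · rcases h with h | h
      · exact Or.inl (by rw [← h, val_add_one])
      · exact Or.inr (by rw [← h, val_add_one])

omit [NeZero m] in
lemma adj_inl_inr (i : Fin m) (a : Fin 2) : (Gm m).Adj (inl i) (inr a) := by
  simp [Gm, fromRel_adj]

omit [NeZero m] in
lemma not_adj_inr_inr (a b : Fin 2) : ¬ (Gm m).Adj (inr a) (inr b) := by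
  simp [Gm, fromRel_adj]


lemma cn_cycle (hm : 4 ≤ m) (i : Fin m) :
    {w | (Gm m).Adj (inl i) w ∧ (Gm m).Adj (inl (i + 1)) w} =
      {inr 0, inr 1} := by
  ext w
  rcases w with k | a
  · simp only [Set.mem_setOf_eq, adj_inl_inl hm, Set.mem_insert_iff, Set.mem_singleton_iff]
    constructor
    · rintro ⟨h1 | h1, h2 | h2⟩
      · exact absurd (h2.trans h1.symm) (one_ne hm (i + 1))
      · have hk : k = i := add_right_cancel h2
        subst hk
        exact absurd h1 (one_ne hm k)
      · rw [← h2] at h1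
        exact absurd h1 (three_ne hm i)
      · exact absurd (h1.symm.trans h2).symm (one_ne hm i)
    · rintro (h | h) <;> simp at h
  · fin_cases a <;> simp [adj_inl_inr]

lemma cn_spoke (hm : 4 ≤ m) (i : Fin m) (a : Fin 2) :
    {w | (Gm m).Adj (inl i) w ∧ (Gm m).Adj (inr a) w} =
      {inl (i + 1), inl (i - 1)} := by
  ext w
  rcases w with k | b
  · simp only [Set.mem_setOf_eq, adj_inl_inl hm, Set.mem_insert_iff, Set.mem_singleton_iff,
      inl.injEq]
    constructor
    · rintro ⟨h1 | h1, -⟩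
      · exact Or.inl h1.symm
      · exact Or.inr (eq_sub_iff_add_eq.mpr h1)
    · rintro (h | h)
      · exact ⟨Or.inl h.symm, (adj_inl_inr k a).symm⟩
      · exact ⟨Or.inr (by rw [h, sub_add_cancel]), (adj_inl_inr k a).symm⟩
  · simp only [Set.mem_setOf_eq, Set.mem_insert_iff, Set.mem_singleton_iff]
    constructor
    · rintro ⟨-, h⟩
      exact absurd h (not_adj_inr_inr a b)
    · rintro (h | h) <;> simp at h

lemma cn_pair (hm : 4 ≤ m) {u v : Fin m ⊕ Fin 2} (h : (Gm m).Adj u v) :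
    ∃ x y, x ≠ y ∧ {w | (Gm m).Adj u w ∧ (Gm m).Adj v w} = {x, y} := by
  have hcomm : ∀ u v : Fin m ⊕ Fin 2,
      {w | (Gm m).Adj u w ∧ (Gm m).Adj v w} = {w | (Gm m).Adj v w ∧ (Gm m).Adj u w} := by
    intro u v; ext w; exact and_comm
  rcases u with i | a <;> rcases v with j | b
  · rcases (adj_inl_inl hm).mp h with h1 | h1
    · exact ⟨inr 0, inr 1, by simp, by rw [← h1]; exact cn_cycle hm i⟩
    · exact ⟨inr 0, inr 1, by simp, by rw [hcomm, ← h1]; exact cn_cycle hm j⟩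
  · refine ⟨inl (i + 1), inl (i - 1), ?_, cn_spoke hm i b⟩
    simp only [ne_eq, inl.injEq]
    intro heq
    exact two_ne hm i (by rw [heq, sub_add_cancel])
  · refine ⟨inl (j + 1), inl (j - 1), ?_, by rw [hcomm]; exact cn_spoke hm j a⟩
    simp only [ne_eq, inl.injEq]
    intro heq
    exact two_ne hm j (by rw [heq, sub_add_cancel])
  · exact absurd h (not_adj_inr_inr a b)


lemma truss (hm : 4 ≤ m) : (Gm m).IsTruss 2 := by
  constructor
  swap
  · intro u v h
    obtain ⟨x, y, hxy, hset⟩ := cn_pair hm h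
    rw [hset, Set.ncard_pair hxy]
  · rintro (i | a)
    · exact ⟨inr 0, adj_inl_inr i 0⟩
    · exact ⟨inl 0, (adj_inl_inr 0 a).symm⟩

lemma mem_edge_cycle (hm : 4 ≤ m) (i : Fin m) : s(inl i, inl (i + 1)) ∈ (Gm m).edgeSet :=
  ((Gm m).mem_edgeSet).mpr ((adj_inl_inl hm).mpr (Or.inl rfl))

omit [NeZero m] in
lemma mem_edge_spoke (i : Fin m) (a : Fin 2) : s(inl i, inr a) ∈ (Gm m).edgeSet :=
  ((Gm m).mem_edgeSet).mpr (adj_inl_inr i a)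

lemma edge_char (hm : 4 ≤ m) {e : Sym2 (Fin m ⊕ Fin 2)} (he : e ∈ (Gm m).edgeSet) :
    (∃ i : Fin m, e = s(inl i, inl (i + 1))) ∨
      (∃ (i : Fin m) (a : Fin 2), e = s(inl i, inr a)) := by
  induction e using Sym2.ind with
  | _ u v =>
    rw [SimpleGraph.mem_edgeSet] at he
    rcases u with i | a <;> rcases v with j | b
    · rcases (adj_inl_inl hm).mp he with h | h
      · exact Or.inl ⟨i, by rw [h]⟩
      · exact Or.inl ⟨j, by rw [h, Sym2.eq_swap]⟩
    · exact Or.inr ⟨i, b, rfl⟩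
    · exact Or.inr ⟨j, a, Sym2.eq_swap⟩
    · exact absurd he (not_adj_inr_inr a b)


lemma crit (hm : 4 ≤ m) (L : Set (Sym2 (Fin m ⊕ Fin 2)))
    (hsub : L ⊆ (Gm m).edgeSet) (hne : L.Nonempty)
    (hL : (SimpleGraph.fromEdgeSet L).EveryEdgeInTriangles 2) : L = (Gm m).edgeSet := by
  set H := SimpleGraph.fromEdgeSet L with hH
  have hadj : ∀ u v : Fin m ⊕ Fin 2, H.Adj u v ↔ s(u, v) ∈ L := by
    intro u v
    rw [hH, SimpleGraph.fromEdgeSet_adj]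
    refine ⟨And.left, fun h => ⟨h, (((Gm m).mem_edgeSet).mp (hsub h)).ne⟩⟩
  have hGadj : ∀ u v : Fin m ⊕ Fin 2, H.Adj u v → (Gm m).Adj u v := fun u v h =>
    ((Gm m).mem_edgeSet).mp (hsub ((hadj u v).mp h))
  -- closure: if an edge is in L, then for every common G-neighbor w of its ends,
  -- both edges to w are in L
  have closure : ∀ u v w : Fin m ⊕ Fin 2, s(u, v) ∈ L →
      (Gm m).Adj u w → (Gm m).Adj v w → s(u, w) ∈ L ∧ s(v, w) ∈ L := by
    intro u v w huv hadjuw hadjvw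
    have hAuv : H.Adj u v := (hadj u v).mpr huv
    obtain ⟨x, y, hxy, hset⟩ := cn_pair hm (hGadj u v hAuv)
    have hss : {w | H.Adj u w ∧ H.Adj v w} ⊆ {w | (Gm m).Adj u w ∧ (Gm m).Adj v w} :=
      fun z hz => ⟨hGadj _ _ hz.1, hGadj _ _ hz.2⟩
    have hfin : {w | (Gm m).Adj u w ∧ (Gm m).Adj v w}.Finite := Set.toFinite _
    have hcard : {w | (Gm m).Adj u w ∧ (Gm m).Adj v w}.ncard ≤
        {w | H.Adj u w ∧ H.Adj v w}.ncard := by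
      rw [hset, Set.ncard_pair hxy]
      exact hL hAuv
    have heq := Set.eq_of_subset_of_ncard_le hss hcard hfin
    have hw : w ∈ {w | H.Adj u w ∧ H.Adj v w} := by
      rw [heq]
      exact ⟨hadjuw, hadjvw⟩
    exact ⟨(hadj u w).mp hw.1, (hadj v w).mp hw.2⟩
  have spoke_of_cycle : ∀ (i : Fin m) (a : Fin 2), s(inl i, inl (i + 1)) ∈ L →
      s(inl i, inr a) ∈ L ∧ s(inl (i + 1), inr a) ∈ L := fun i a h =>
    closure _ _ _ h (adj_inl_inr i a) (adj_inl_inr (i + 1) a)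
  have cycle_of_spoke : ∀ (i : Fin m) (a : Fin 2), s(inl i, inr a) ∈ L →
      s(inl i, inl (i + 1)) ∈ L := fun i a h =>
    (closure _ _ _ h ((adj_inl_inl hm).mpr (Or.inl rfl)) ((adj_inl_inr (i + 1) a).symm)).1
  have step : ∀ i : Fin m, s(inl i, inl (i + 1)) ∈ L → s(inl (i + 1), inl (i + 1 + 1)) ∈ L :=
    fun i h => cycle_of_spoke (i + 1) 0 (spoke_of_cycle i 0 h).2
  -- some cycle edge is in L
  have base : ∃ i : Fin m, s(inl i, inl (i + 1)) ∈ L := by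
    obtain ⟨e, he⟩ := hne
    rcases edge_char hm (hsub he) with ⟨i, rfl⟩ | ⟨i, a, rfl⟩
    · exact ⟨i, he⟩
    · exact ⟨i, cycle_of_spoke i a he⟩
  obtain ⟨i0, hi0⟩ := base
  have all_k : ∀ k : ℕ, s(inl (i0 + (k : Fin m)), inl (i0 + (k : Fin m) + 1)) ∈ L := by
    intro k
    induction k with
    | zero => simpa using hi0
    | succ k ih =>
      have hc : ((k + 1 : ℕ) : Fin m) = (k : Fin m) + 1 := by push_cast; ring
      rw [hc, ← add_assoc]
      exact step _ ih
  have all_cycle : ∀ j : Fin m, s(inl j, inl (j + 1)) ∈ L := by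
    intro j
    have h1 : i0 + (((j - i0 : Fin m) : ℕ) : Fin m) = j := by
      rw [Fin.cast_val_eq_self, add_comm, sub_add_cancel]
    have := all_k ((j - i0 : Fin m) : ℕ)
    rwa [h1] at this
  have all_spoke : ∀ (i : Fin m) (a : Fin 2), s(inl i, inr a) ∈ L := fun i a =>
    (spoke_of_cycle i a (all_cycle i)).1
  apply Set.Subset.antisymm hsub
  intro e he
  rcases edge_char hm he with ⟨i, rfl⟩ | ⟨i, a, rfl⟩
  · exact all_cycle i
  · exact all_spoke i a


lemma ecard (hm : 4 ≤ m) : (Gm m).edgeSet.ncard = 3 * m := by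
  have hE : (Gm m).edgeSet =
      Set.range (fun i : Fin m => s(inl i, inl (i + 1))) ∪
        Set.range (fun p : Fin m × Fin 2 => s(inl p.1, inr p.2)) := by
    ext e
    constructor
    · intro he
      rcases edge_char hm he with ⟨i, rfl⟩ | ⟨i, a, rfl⟩
      · exact Or.inl ⟨i, rfl⟩
      · exact Or.inr ⟨(i, a), rfl⟩
    · rintro (⟨i, rfl⟩ | ⟨⟨i, a⟩, rfl⟩)
      · exact mem_edge_cycle hm i
      · exact mem_edge_spoke i a
  have hcinj : Function.Injective (fun i : Fin m => (s(inl i, inl (i + 1)) : Sym2 (Fin m ⊕ Fin 2))) := by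
    intro i j h
    simp only [Sym2.eq, Sym2.rel_iff', Prod.mk.injEq, Prod.swap_prod_mk, inl.injEq] at h
    rcases h with ⟨h1, -⟩ | ⟨h1, h2⟩
    · exact h1
    · exfalso
      rw [← h2] at h1
      exact two_ne hm i h1.symm
  have hsinj : Function.Injective (fun p : Fin m × Fin 2 => (s(inl p.1, inr p.2) : Sym2 (Fin m ⊕ Fin 2))) := by
    rintro ⟨i, a⟩ ⟨j, b⟩ h
    simp only [Sym2.eq, Sym2.rel_iff', Prod.mk.injEq, Prod.swap_prod_mk] at h
    rcases h with ⟨h1, h2⟩ | ⟨h1, -⟩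
    · simp only [inl.injEq, inr.injEq] at h1 h2
      simp [h1, h2]
    · simp at h1
  have hdisj : Disjoint (Set.range (fun i : Fin m => (s(inl i, inl (i + 1)) : Sym2 (Fin m ⊕ Fin 2))))
      (Set.range (fun p : Fin m × Fin 2 => s(inl p.1, inr p.2))) := by
    rw [Set.disjoint_left]
    rintro e ⟨i, rfl⟩ ⟨⟨j, b⟩, h⟩
    simp only [Sym2.eq, Sym2.rel_iff', Prod.mk.injEq, Prod.swap_prod_mk] at h
    rcases h with ⟨h1, h2⟩ | ⟨h1, h2⟩ <;> simp_all
  have hr1 : (Set.range (fun i : Fin m => (s(inl i, inl (i + 1)) : Sym2 (Fin m ⊕ Fin 2)))).ncard = m := by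
    rw [← Set.image_univ, Set.ncard_image_of_injective _ hcinj, Set.ncard_univ]
    simp
  have hr2 : (Set.range (fun p : Fin m × Fin 2 => (s(inl p.1, inr p.2) : Sym2 (Fin m ⊕ Fin 2)))).ncard = m * 2 := by
    rw [← Set.image_univ, Set.ncard_image_of_injective _ hsinj, Set.ncard_univ]
    simp
  rw [hE, Set.ncard_union_eq hdisj (Set.finite_range _) (Set.finite_range _), hr1, hr2]
  ring

end TwoTrussAux

theorem cycleWithTwoApexes_critical_two_truss (n : ℕ) (hn : 6 ≤ n) :
    (cycleWithTwoApexes n).IsCriticalTruss 2 ∧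
    Fintype.card (Fin (n - 2) ⊕ Fin 2) = n ∧
    (cycleWithTwoApexes n).edgeSet.ncard = 3 * n - 6 := by
  haveI : NeZero (n - 2) := ⟨by omega⟩
  have hm : 4 ≤ n - 2 := by omega
  rw [TwoTrussAux.cyc_eq]
  refine ⟨⟨TwoTrussAux.truss hm, ?_⟩, ?_, ?_⟩
  · intro L hLsub hLne hLne'
    intro hL
    exact hLne' (TwoTrussAux.crit hm L hLsub hLne hL)
  · simp
    omega
  · rw [TwoTrussAux.ecard hm]
    omega
end

section
/- Every critical k-truss on n vertices with n ≥ k+4 has at least n(k+2)/2 edges. -/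
lemma critical_truss_mindeg {V : Type*} [Fintype V]
    (G : SimpleGraph V) (k : ℕ)
    (hn : k + 4 ≤ Fintype.card V) (h : G.IsCriticalTruss k) (v : V) :
    k + 2 ≤ (G.neighborSet v).ncard := by
  by_contra hlt
  push_neg at hlt
  obtain ⟨u, huv⟩ := h.1.1 v
  have hu : u ∈ G.neighborSet v := huv
  have hC : ∀ u' ∈ G.neighborSet v,
      {w : V | G.Adj v w ∧ G.Adj u' w} ⊆ G.neighborSet v \ {u'} := by
    intro u' _ w hw
    exact ⟨hw.1, by rintro rfl; exact G.irrefl hw.2⟩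
  have hcard : ∀ u' ∈ G.neighborSet v, k ≤ {w : V | G.Adj v w ∧ G.Adj u' w}.ncard := by
    intro u' hu'
    exact h.1.2 hu'
  -- N(v) has exactly k+1 elements
  have hdiff : ∀ u' ∈ G.neighborSet v,
      (G.neighborSet v \ {u'}).ncard = (G.neighborSet v).ncard - 1 := by
    intro u' hu'
    exact Set.ncard_diff_singleton_of_mem hu'
  have hpos : 0 < (G.neighborSet v).ncard :=
    (Set.ncard_pos (Set.toFinite _)).mpr ⟨u, hu⟩
  have hle1 : k ≤ (G.neighborSet v \ {u}).ncard :=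
    le_trans (hcard u hu) (Set.ncard_le_ncard (hC u hu) (Set.toFinite _))
  have hNv : (G.neighborSet v).ncard = k + 1 := by
    rw [hdiff u hu] at hle1; omega
  have hEq : ∀ u' ∈ G.neighborSet v,
      {w : V | G.Adj v w ∧ G.Adj u' w} = G.neighborSet v \ {u'} := by
    intro u' hu'
    refine Set.eq_of_subset_of_ncard_le (hC u' hu') ?_ (Set.toFinite _)
    rw [hdiff u' hu', hNv]
    simpa using hcard u' hu'
  have hclq : ∀ a ∈ G.neighborSet v, ∀ b ∈ G.neighborSet v, a ≠ b → G.Adj a b := by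
    intro a ha b hb hab
    have hb' : b ∈ G.neighborSet v \ {a} := ⟨hb, by simpa using hab.symm⟩
    rw [← hEq a ha] at hb'
    exact hb'.2
  set S : Set V := insert v (G.neighborSet v) with hS
  have hvS : v ∈ S := Set.mem_insert _ _
  have huS : u ∈ S := Set.mem_insert_of_mem _ hu
  have hSclq : ∀ a ∈ S, ∀ b ∈ S, a ≠ b → G.Adj a b := by
    intro a ha b hb hab
    rcases ha with rfl | ha
    · rcases hb with rfl | hb
      · exact absurd rfl hab
      · exact hb
    · rcases hb with rfl | hb
      · exact (ha : G.Adj b a).symm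
      · exact hclq a ha b hb hab
  have hvN : v ∉ G.neighborSet v := fun hv => G.irrefl hv
  have hScard : S.ncard = k + 2 := by
    rw [hS, Set.ncard_insert_of_notMem hvN (Set.toFinite _), hNv]
  set L : Set (Sym2 V) := {e : Sym2 V | e ∈ G.edgeSet ∧ ∀ x ∈ e, x ∈ S} with hL
  have hLsub : L ⊆ G.edgeSet := fun e he => he.1
  have hmemL : ∀ a ∈ S, ∀ b ∈ S, a ≠ b → s(a, b) ∈ L := by
    intro a ha b hb hab
    refine ⟨(hSclq a ha b hb hab), ?_⟩
    intro x hx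
    rcases Sym2.mem_iff.mp hx with rfl | rfl
    · exact ha
    · exact hb
  have hLne : L.Nonempty := ⟨s(v, u), hmemL v hvS u huS (G.ne_of_adj huv)⟩
  have hwex : ∃ w : V, w ∉ S := by
    by_contra hw
    push_neg at hw
    have h2 : S = Set.univ := Set.eq_univ_iff_forall.mpr hw
    have h3 : S.ncard = Fintype.card V := by
      rw [h2, Set.ncard_univ, Nat.card_eq_fintype_card]
    omega
  obtain ⟨w, hwS⟩ := hwex
  have hLne' : L ≠ G.edgeSet := by
    intro heq
    obtain ⟨x, hwx⟩ := h.1.1 w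
    have : s(w, x) ∈ L := heq ▸ hwx
    exact hwS (this.2 w (Sym2.mem_mk_left w x))
  apply h.2 L hLsub hLne hLne'
  intro a b hab
  rw [SimpleGraph.fromEdgeSet_adj] at hab
  obtain ⟨habL, hne⟩ := hab
  have haS : a ∈ S := habL.2 a (Sym2.mem_mk_left a b)
  have hbS : b ∈ S := habL.2 b (Sym2.mem_mk_right a b)
  have hset : {w : V | (SimpleGraph.fromEdgeSet L).Adj a w ∧
      (SimpleGraph.fromEdgeSet L).Adj b w} = S \ {a, b} := by
    ext x
    simp only [Set.mem_setOf_eq, SimpleGraph.fromEdgeSet_adj, Set.mem_diff,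
      Set.mem_insert_iff, Set.mem_singleton_iff]
    constructor
    · rintro ⟨⟨hax, hax'⟩, ⟨hbx, hbx'⟩⟩
      exact ⟨hax.2 x (Sym2.mem_mk_right a x), by push_neg; exact ⟨fun e => hax' e.symm, fun e => hbx' e.symm⟩⟩
    · rintro ⟨hxS, hx⟩
      push_neg at hx
      exact ⟨⟨hmemL a haS x hxS (fun e => hx.1 e.symm), fun e => hx.1 e.symm⟩,
        ⟨hmemL b hbS x hxS (fun e => hx.2 e.symm), fun e => hx.2 e.symm⟩⟩
  rw [hset]
  have hpair : ({a, b} : Set V) ⊆ S := by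
    intro x hx
    simp only [Set.mem_insert_iff, Set.mem_singleton_iff] at hx
    rcases hx with rfl | rfl
    · exact haS
    · exact hbS
  have : (S \ {a, b}).ncard = S.ncard - ({a, b} : Set V).ncard :=
    Set.ncard_diff hpair (Set.toFinite _)
  rw [this, hScard, Set.ncard_pair hne]
  omega

theorem critical_truss_min_edges {V : Type*} [Fintype V]
    (G : SimpleGraph V) (k : ℕ) (hk : 2 ≤ k)
    (hn : k + 4 ≤ Fintype.card V) (h : G.IsCriticalTruss k) :
    (Fintype.card V : ℚ) * ((k : ℚ) + 2) / 2 ≤ (G.edgeSet.ncard : ℚ) := by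
  classical
  have hdeg : ∀ v : V, k + 2 ≤ G.degree v := by
    intro v
    have h1 := critical_truss_mindeg G k hn h v
    have h2 : (G.neighborSet v).ncard = G.degree v := by
      rw [Set.ncard_eq_toFinset_card']
      simp [SimpleGraph.degree, SimpleGraph.neighborFinset_def]
    rwa [h2] at h1
  have hsum : Fintype.card V * (k + 2) ≤ ∑ v : V, G.degree v := by
    calc Fintype.card V * (k + 2) = ∑ _v : V, (k + 2) := by
          rw [Finset.sum_const, Finset.card_univ, smul_eq_mul]
      _ ≤ ∑ v : V, G.degree v := Finset.sum_le_sum (fun v _ => hdeg v)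
  rw [SimpleGraph.sum_degrees_eq_twice_card_edges] at hsum
  have hE : G.edgeSet.ncard = G.edgeFinset.card := by
    rw [Set.ncard_eq_toFinset_card']
    congr 1
  rw [hE, div_le_iff₀ (by norm_num : (0:ℚ) < 2)]
  have h' : ((Fintype.card V * (k + 2) : ℕ) : ℚ) ≤ ((2 * G.edgeFinset.card : ℕ) : ℚ) := by
    exact_mod_cast hsum
  push_cast at h' ⊢
  linarith
end
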